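/- Let Q(z) = Σ_{i=-D}^{D} q_i z^i be a Laurent polynomial of degree D with complex coefficients. Then Q(z) is real and nonnegative for every complex z with |z| = 1 if and only if there exists a complex polynomial P(z) = Σ_{i=0}^{D} p_i z^i of degree at most D such that Q(z) = P(z) · conj(P(1/conj(z))) for all nonzero complex z. -/

import Mathlib

open Polynomial Complex

lemma eval_map_conj (S : Polynomial ℂ) (z : ℂ) :
    (S.map (starRingEnd ℂ)).eval z = (starRingEnd ℂ) (S.eval ((starRingEnd ℂ) z)) := by
  rw [eval_map]
  rw [show S.eval ((starRingEnd ℂ) z) = eval₂ (RingHom.id ℂ) ((starRingEnd ℂ) z) S from rfl]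
  rw [hom_eval₂]
  simp

lemma eval_ofReal_map (R : Polynomial ℝ) (t : ℝ) :
    (R.map Complex.ofRealHom).eval (t : ℂ) = ((R.eval t : ℝ) : ℂ) := by
  rw [show ((t:ℝ):ℂ) = Complex.ofRealHom t from rfl, eval_map, eval₂_at_apply]
  simp

lemma real_coeffs (P : Polynomial ℂ) (h : ∀ t : ℝ, ∃ r : ℝ, P.eval (t:ℂ) = (r:ℂ)) :
    ∃ R : Polynomial ℝ, R.map Complex.ofRealHom = P := by
  have hconj : P.map (starRingEnd ℂ) = P := by
    have hz : P.map (starRingEnd ℂ) - P = 0 := by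
      apply Polynomial.eq_zero_of_infinite_isRoot
      apply Set.infinite_of_injective_forall_mem (f := fun t : ℝ => (t : ℂ))
        Complex.ofReal_injective
      intro t
      obtain ⟨r, hr⟩ := h t
      simp only [Set.mem_setOf_eq, IsRoot.def, eval_sub, sub_eq_zero]
      rw [eval_map_conj]
      rw [show (starRingEnd ℂ) (t:ℂ) = (t:ℂ) by simp]
      rw [hr]
      simp
    linear_combination (norm := module) hz
  refine ⟨∑ k ∈ Finset.range (P.natDegree + 1), Polynomial.C ((P.coeff k).re) * X ^ k, ?_⟩
  ext k
  rw [coeff_map]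
  by_cases hk : k ≤ P.natDegree
  · have hre : ((P.coeff k).re : ℂ) = P.coeff k := by
      have : (starRingEnd ℂ) (P.coeff k) = P.coeff k := by
        conv_rhs => rw [← hconj]
        rw [coeff_map]
      exact Complex.conj_eq_iff_re.mp this ▸ rfl
    simp only [finset_sum_coeff, coeff_C_mul, coeff_X_pow]
    rw [Finset.sum_eq_single k]
    · simpa using hre
    · intro b _ hb; simp [Ne.symm hb]
    · intro hnk; exact absurd (Finset.mem_range.mpr (Nat.lt_succ_of_le hk)) hnk
  · push_neg at hk
    rw [Polynomial.coeff_eq_zero_of_natDegree_lt hk]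
    simp only [finset_sum_coeff, coeff_C_mul, coeff_X_pow]
    rw [Finset.sum_eq_zero]
    · simp
    · intro b hb
      have : b ≠ k := by intro hbk; subst hbk; exact absurd (Finset.mem_range.mp hb) (by omega)
      simp [Ne.symm this]

lemma sos_aux : ∀ n : ℕ, ∀ R : Polynomial ℝ, R.natDegree ≤ n → (∀ t : ℝ, 0 ≤ R.eval t) →
    ∃ S : Polynomial ℂ, R.map Complex.ofRealHom = S * S.map (starRingEnd ℂ) := by
  intro n
  induction n using Nat.strong_induction_on with
  | _ n ih =>
  intro R hdeg hpos
  by_cases hR0 : R = 0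
  · exact ⟨0, by simp [hR0]⟩
  by_cases hdeg0 : R.natDegree = 0
  · obtain ⟨c, rfl⟩ := Polynomial.natDegree_eq_zero.mp hdeg0
    have hc : 0 ≤ c := by simpa using hpos 0
    refine ⟨Polynomial.C ((Real.sqrt c : ℝ) : ℂ), ?_⟩
    rw [Polynomial.map_C, Polynomial.map_C, ← Polynomial.C_mul]
    congr 1
    rw [show (starRingEnd ℂ) ((Real.sqrt c : ℝ) : ℂ) = ((Real.sqrt c : ℝ) : ℂ) by simp]
    rw [← Complex.ofReal_mul, Real.mul_self_sqrt hc]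
    rfl
  -- now natDegree R ≥ 1
  by_cases hroot : ∃ a : ℝ, R.eval a = 0
  · -- real root: even multiplicity via derivative vanishing
    obtain ⟨a, ha⟩ := hroot
    have hmin : IsLocalMin (fun t => R.eval t) a := by
      apply IsMinOn.isLocalMin _ (Filter.univ_mem)
      intro t _
      simp only [Set.mem_setOf_eq, ha]
      exact hpos t
    have hder : R.derivative.eval a = 0 := by
      have h1 := hmin.deriv_eq_zero
      rwa [Polynomial.deriv] at h1
    obtain ⟨g, hg⟩ := Polynomial.dvd_iff_isRoot.mpr ha
    have hga : g.eval a = 0 := by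
      have h2 : R.derivative = g + (X - Polynomial.C a) * g.derivative := by
        rw [hg, derivative_mul, derivative_X_sub_C, one_mul]
      have h3 := hder
      rw [h2] at h3
      simpa using h3
    obtain ⟨h, hh⟩ := Polynomial.dvd_iff_isRoot.mpr hga
    have hRfac : R = (X - Polynomial.C a) ^ 2 * h := by rw [hg, hh]; ring
    have hXa : (X - Polynomial.C a : Polynomial ℝ) ≠ 0 := X_sub_C_ne_zero a
    have hhne : h ≠ 0 := by
      intro h0; rw [h0, mul_zero] at hRfac; exact hR0 hRfac
    have hdegR : R.natDegree = 2 + h.natDegree := by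
      rw [hRfac, Polynomial.natDegree_mul (pow_ne_zero 2 hXa) hhne,
        Polynomial.natDegree_pow, Polynomial.natDegree_X_sub_C]
    have hhpos : ∀ t : ℝ, 0 ≤ h.eval t := by
      intro t
      by_contra hlt
      push_neg at hlt
      have key : ∀ s : ℝ, s ≠ a → 0 ≤ h.eval s := by
        intro s hs
        have h4 := hpos s
        rw [hRfac] at h4
        simp only [Polynomial.eval_mul, Polynomial.eval_pow, Polynomial.eval_sub,
          Polynomial.eval_X, Polynomial.eval_C] at h4
        have hsne : s - a ≠ 0 := sub_ne_zero.mpr hs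
        have hsq : 0 < (s - a) ^ 2 := by positivity
        exact (mul_nonneg_iff_of_pos_left hsq).mp h4
      have hta : t = a := by
        by_contra hta; exact absurd (key t hta) (not_le.mpr hlt)
      subst hta
      have hcont : ContinuousAt (fun s => h.eval s) t := (Polynomial.continuous h).continuousAt
      have hmem : {s : ℝ | h.eval s < 0} ∈ nhds t := hcont (Iio_mem_nhds hlt)
      have hmem2 : {s : ℝ | h.eval s < 0} ∈ nhdsWithin t {t}ᶜ :=
        nhdsWithin_le_nhds hmem
      obtain ⟨s, hs⟩ := Filter.nonempty_of_mem (Filter.inter_mem hmem2 self_mem_nhdsWithin)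
      exact absurd (key s hs.2) (not_le.mpr hs.1)
    obtain ⟨S₁, hS₁⟩ := ih h.natDegree (by omega) h (le_refl _) hhpos
    refine ⟨(X - Polynomial.C (a : ℂ)) * S₁, ?_⟩
    rw [hRfac]
    rw [Polynomial.map_mul, Polynomial.map_pow, Polynomial.map_sub, Polynomial.map_X,
      Polynomial.map_C, hS₁, Polynomial.map_mul, Polynomial.map_sub, Polynomial.map_X,
      Polynomial.map_C]
    rw [show (starRingEnd ℂ) ((a : ℝ) : ℂ) = ((a:ℝ):ℂ) by simp]
    simp only [Complex.ofRealHom_eq_coe]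
    ring
  · -- no real root: complex conjugate pair
    push_neg at hroot
    set Rc : Polynomial ℂ := R.map Complex.ofRealHom with hRc
    have hRcne : Rc ≠ 0 := by
      simp only [hRc, ne_eq, Polynomial.map_eq_zero_iff Complex.ofRealHom.injective]
      exact hR0
    have hdegRc : Rc.natDegree = R.natDegree :=
      Polynomial.natDegree_map_eq_of_injective Complex.ofRealHom.injective R
    have hdpos : 0 < Rc.degree := by
      rw [Polynomial.degree_eq_natDegree hRcne]
      exact_mod_cast Nat.pos_of_ne_zero (by rw [hdegRc]; exact hdeg0)
    obtain ⟨ρ, hρ⟩ := Complex.exists_root hdpos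
    have hρim : ρ.im ≠ 0 := by
      intro him
      have : ρ = ((ρ.re : ℝ) : ℂ) := by
        apply Complex.ext <;> simp [him]
      rw [this] at hρ
      have := hρ
      rw [Polynomial.IsRoot.def, hRc, eval_ofReal_map] at this
      exact hroot ρ.re (by exact_mod_cast this)
    have hconjroot : Rc.eval ((starRingEnd ℂ) ρ) = 0 := by
      have h5 : Rc.map (starRingEnd ℂ) = Rc := by
        rw [hRc, Polynomial.map_map]
        congr 1
        ext x
        simp
      have h6 := eval_map_conj Rc ((starRingEnd ℂ) ρ)
      rw [h5] at h6
      rw [h6]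
      rw [show (starRingEnd ℂ) ((starRingEnd ℂ) ρ) = ρ by simp]
      rw [hρ]
      simp
    have hρne : ρ ≠ (starRingEnd ℂ) ρ := by
      intro heq
      apply hρim
      have := congrArg Complex.im heq
      simp only [Complex.conj_im] at this
      linarith
    -- quadratic factor
    set qd : Polynomial ℝ := X ^ 2 - Polynomial.C (2 * ρ.re) * X + Polynomial.C (Complex.normSq ρ)
      with hqd
    have hqdmap : qd.map Complex.ofRealHom
        = (X - Polynomial.C ρ) * (X - Polynomial.C ((starRingEnd ℂ) ρ)) := by
      have h7 : ρ + (starRingEnd ℂ) ρ = ((2 * ρ.re : ℝ) : ℂ) := by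
        rw [Complex.add_conj, Complex.ofReal_mul, Complex.ofReal_ofNat]
      have h8 : ρ * (starRingEnd ℂ) ρ = ((Complex.normSq ρ : ℝ) : ℂ) := Complex.mul_conj ρ
      have h9 : (X - Polynomial.C ρ) * (X - Polynomial.C ((starRingEnd ℂ) ρ))
          = X ^ 2 - Polynomial.C (ρ + (starRingEnd ℂ) ρ) * X
            + Polynomial.C (ρ * (starRingEnd ℂ) ρ) := by
        rw [Polynomial.C_add, Polynomial.C_mul]; ring
      rw [h9, h7, h8]
      simp only [hqd, Polynomial.map_add, Polynomial.map_sub, Polynomial.map_pow,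
        Polynomial.map_mul, Polynomial.map_X, Polynomial.map_C, Complex.ofRealHom_eq_coe]
    have hqdmonic : qd.Monic := by
      have hqd2 : qd = X ^ 2 + (Polynomial.C (Complex.normSq ρ) - Polynomial.C (2 * ρ.re) * X) := by
        rw [hqd]; ring
      rw [hqd2]
      apply Polynomial.monic_X_pow_add
      apply lt_of_le_of_lt (Polynomial.degree_sub_le _ _)
      rw [max_lt_iff]
      refine ⟨lt_of_le_of_lt Polynomial.degree_C_le (by norm_num), ?_⟩
      apply lt_of_le_of_lt (Polynomial.degree_mul_le _ _)
      apply lt_of_le_of_lt (add_le_add Polynomial.degree_C_le Polynomial.degree_X_le)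
      norm_num
    have hdvdc : qd.map Complex.ofRealHom ∣ Rc := by
      rw [hqdmap]
      obtain ⟨g, hgg⟩ := Polynomial.dvd_iff_isRoot.mpr hρ
      have hgroot : g.eval ((starRingEnd ℂ) ρ) = 0 := by
        have h9 := hconjroot
        rw [hgg] at h9
        simp only [Polynomial.eval_mul, Polynomial.eval_sub, Polynomial.eval_X,
          Polynomial.eval_C] at h9
        rcases mul_eq_zero.mp h9 with h10 | h10
        · exact absurd (by linear_combination -h10 : ρ = (starRingEnd ℂ) ρ) hρne
        · exact h10
      obtain ⟨g2, hg2⟩ := Polynomial.dvd_iff_isRoot.mpr hgroot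
      exact ⟨g2, by rw [hgg, hg2]; ring⟩
    have hdvd : qd ∣ R := by
      rw [← Polynomial.map_dvd_map Complex.ofRealHom Complex.ofRealHom.injective hqdmonic]
      exact hdvdc
    obtain ⟨h, hh⟩ := hdvd
    have hqdpos : ∀ t : ℝ, 0 < qd.eval t := by
      intro t
      have : qd.eval t = (t - ρ.re) ^ 2 + ρ.im ^ 2 := by
        simp only [hqd, Polynomial.eval_add, Polynomial.eval_sub, Polynomial.eval_pow,
          Polynomial.eval_mul, Polynomial.eval_X, Polynomial.eval_C, Complex.normSq_apply]
        ring
      rw [this]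
      positivity
    have hhne : h ≠ 0 := by
      intro h0; rw [h0, mul_zero] at hh; exact hR0 hh
    have hqdne : qd ≠ 0 := hqdmonic.ne_zero
    have hdegqd : qd.natDegree = 2 := by
      have := Polynomial.natDegree_map_eq_of_injective Complex.ofRealHom.injective qd
      rw [hqdmap] at this
      rw [← this, Polynomial.natDegree_mul (X_sub_C_ne_zero ρ) (X_sub_C_ne_zero _),
        Polynomial.natDegree_X_sub_C, Polynomial.natDegree_X_sub_C]
    have hdegR : R.natDegree = 2 + h.natDegree := by
      rw [hh, Polynomial.natDegree_mul hqdne hhne, hdegqd]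
    have hhpos : ∀ t : ℝ, 0 ≤ h.eval t := by
      intro t
      have h11 := hpos t
      rw [hh, Polynomial.eval_mul] at h11
      exact (mul_nonneg_iff_of_pos_left (hqdpos t)).mp h11
    obtain ⟨S₁, hS₁⟩ := ih h.natDegree (by omega) h (le_refl _) hhpos
    refine ⟨(X - Polynomial.C ρ) * S₁, ?_⟩
    rw [hRc, hh, Polynomial.map_mul, hqdmap, hS₁]
    rw [Polynomial.map_mul, Polynomial.map_sub, Polynomial.map_X, Polynomial.map_C]
    ring


noncomputable section

noncomputable def cayU (t : ℝ) : ℂ := 1 + Complex.I * t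
noncomputable def cayV (t : ℝ) : ℂ := 1 - Complex.I * t
noncomputable def cay (t : ℝ) : ℂ := cayU t / cayV t

lemma cayU_ne (t : ℝ) : cayU t ≠ 0 := by
  intro h
  have := congrArg Complex.re h
  simp [cayU] at this
lemma cayV_ne (t : ℝ) : cayV t ≠ 0 := by
  intro h
  have := congrArg Complex.re h
  simp [cayV] at this
lemma cay_ne (t : ℝ) : cay t ≠ 0 := div_ne_zero (cayU_ne t) (cayV_ne t)
lemma conj_cayU (t : ℝ) : (starRingEnd ℂ) (cayU t) = cayV t := by
  simp [cayU, cayV]; ring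
lemma cay_abs (t : ℝ) : ‖cay t‖ = 1 := by
  rw [cay, norm_div, ← conj_cayU, Complex.norm_conj]
  exact div_self (norm_ne_zero_iff.mpr (cayU_ne t))
lemma cayUV (t : ℝ) : cayU t * cayV t = ((1 + t^2 : ℝ) : ℂ) := by
  simp only [cayU, cayV]
  push_cast
  ring_nf
  rw [Complex.I_sq]
  ring
lemma cay_inj : Function.Injective cay := by
  intro s t h
  rw [cay, cay, div_eq_div_iff (cayV_ne s) (cayV_ne t)] at h
  simp only [cayU, cayV] at h
  have h2 : Complex.I * (2 * s) = Complex.I * (2 * t) := by linear_combination h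
  have h3 : (s : ℂ) = t := by
    field_simp at h2
    exact_mod_cast h2
  exact_mod_cast h3
lemma cay_add_one (t : ℝ) : cay t + 1 = 2 / cayV t := by
  rw [cay, div_add' _ _ _ (cayV_ne t)]
  congr 1
  simp [cayU, cayV]; ring
lemma cay_sub_one (t : ℝ) : cay t - 1 = 2 * Complex.I * t / cayV t := by
  rw [cay, div_sub' (cayV_ne t)]
  congr 1
  simp [cayU, cayV]; ring

end

lemma Pval (D : ℕ) (S : Polynomial ℂ) (hS : S.natDegree ≤ D) (t : ℝ) (v z : ℂ) (hv : v ≠ 0)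
    (hz1 : z + 1 = 2 / v) (hz2 : z - 1 = 2 * Complex.I * t / v) :
    (Polynomial.C (((2:ℂ)^D)⁻¹) * ∑ j ∈ Finset.range (D+1),
        Polynomial.C (S.coeff j) * (Polynomial.C (-Complex.I) * (X - 1)) ^ j
          * (X + 1) ^ (D - j)).eval z
      = S.eval (t : ℂ) / v ^ D := by
  rw [Polynomial.eval_mul, Polynomial.eval_C, Polynomial.eval_finset_sum]
  have hterm : ∀ j ∈ Finset.range (D+1),
      (Polynomial.C (S.coeff j) * (Polynomial.C (-Complex.I) * (X - 1)) ^ j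
        * (X + 1) ^ (D - j)).eval z = (2:ℂ)^D * (S.coeff j * (t:ℂ)^j) / v ^ D := by
    intro j hj
    have hjD : j ≤ D := Nat.lt_succ_iff.mp (Finset.mem_range.mp hj)
    simp only [Polynomial.eval_mul, Polynomial.eval_pow, Polynomial.eval_add,
      Polynomial.eval_sub, Polynomial.eval_one, Polynomial.eval_C, Polynomial.eval_X]
    rw [hz1, hz2]
    have : -Complex.I * (2 * Complex.I * t / v) = 2 * t / v := by
      field_simp
      ring_nf
      rw [Complex.I_sq]
      ring
    rw [this, div_pow, div_pow]
    rw [show (2 * (t:ℂ))^j = 2^j * t^j by ring]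
    field_simp
    rw [show (2:ℂ)^D = 2^j * 2^(D-j) by rw [← pow_add]; congr 1; omega,
      show (v:ℂ)^D = v^j * v^(D-j) by rw [← pow_add]; congr 1; omega]
    ring
  rw [Finset.sum_congr rfl hterm]
  rw [Polynomial.eval_eq_sum_range' (Nat.lt_succ_of_le hS) (t:ℂ)]
  rw [Finset.sum_div, Finset.mul_sum]
  field_simp

section FRmain

open Polynomial Complex

theorem fejer_riesz_forward (D : ℕ) (q : ℤ → ℂ)
    (H : ∀ z : ℂ, ‖z‖ = 1 →
      ∃ r : ℝ, 0 ≤ r ∧ (∑ i ∈ Finset.Icc (-(D : ℤ)) (D : ℤ), q i * z ^ i) = (r : ℂ)) :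
    (∃ p : ℕ → ℂ, ∀ z : ℂ, z ≠ 0 →
      (∑ i ∈ Finset.Icc (-(D : ℤ)) (D : ℤ), q i * z ^ i) =
        (∑ i ∈ Finset.range (D + 1), p i * z ^ i) *
          (starRingEnd ℂ) (∑ i ∈ Finset.range (D + 1), p i * ((starRingEnd ℂ) z)⁻¹ ^ i)) := by
  classical
  set Rc : Polynomial ℂ := ∑ i ∈ Finset.Icc (-(D : ℤ)) (D : ℤ), Polynomial.C (q i)
      * (1 + Polynomial.C Complex.I * X) ^ ((D : ℤ) + i).toNat
      * (1 - Polynomial.C Complex.I * X) ^ ((D : ℤ) - i).toNat with hRcdef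
  -- step 2 : evaluation of Rc at real points
  have heval : ∀ t : ℝ, Rc.eval (t : ℂ)
      = ((1 + t^2 : ℝ) : ℂ) ^ D * ∑ i ∈ Finset.Icc (-(D : ℤ)) (D : ℤ), q i * (cay t) ^ i := by
    intro t
    rw [hRcdef, Polynomial.eval_finset_sum, Finset.mul_sum]
    apply Finset.sum_congr rfl
    intro i hi
    obtain ⟨h1, h2⟩ := Finset.mem_Icc.mp hi
    have hun : cayU t ≠ 0 := cayU_ne t
    have hvn : cayV t ≠ 0 := cayV_ne t
    have huv : cayU t * cayV t = ((1 + t^2 : ℝ) : ℂ) := cayUV t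
    simp only [Polynomial.eval_mul, Polynomial.eval_pow, Polynomial.eval_add, Polynomial.eval_sub,
      Polynomial.eval_one, Polynomial.eval_C, Polynomial.eval_X]
    rw [show (1 : ℂ) + Complex.I * t = cayU t from rfl, show (1 : ℂ) - Complex.I * t = cayV t from rfl,
      ← huv, cay]
    have e1 : cayU t ^ ((D : ℤ) + i).toNat = cayU t ^ ((D : ℤ) + i) := by
      rw [← zpow_natCast, Int.toNat_of_nonneg (by omega)]
    have e2 : cayV t ^ ((D : ℤ) - i).toNat = cayV t ^ ((D : ℤ) - i) := by
      rw [← zpow_natCast, Int.toNat_of_nonneg (by omega)]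
    have e3 : (cayU t * cayV t) ^ D = (cayU t * cayV t) ^ (D : ℤ) := by rw [zpow_natCast]
    rw [e1, e2, e3, div_zpow, mul_zpow, zpow_add₀ hun, zpow_sub₀ hvn]
    field_simp
  -- step 3 : Rc has real coefficients and nonneg real values
  have hrval : ∀ t : ℝ, ∃ r : ℝ, 0 ≤ r ∧ Rc.eval (t : ℂ) = (((1 + t^2)^D * r : ℝ) : ℂ) := by
    intro t
    obtain ⟨r, hr0, hr⟩ := H (cay t) (cay_abs t)
    exact ⟨r, hr0, by rw [heval t, hr]; push_cast; ring⟩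
  obtain ⟨R₀, hR₀⟩ := real_coeffs Rc (fun t => by
    obtain ⟨r, _, hr⟩ := hrval t; exact ⟨(1 + t^2)^D * r, hr⟩)
  have hR₀pos : ∀ t : ℝ, 0 ≤ R₀.eval t := by
    intro t
    obtain ⟨r, hr0, hr⟩ := hrval t
    have h1 : ((R₀.eval t : ℝ) : ℂ) = (((1 + t^2)^D * r : ℝ) : ℂ) := by
      rw [← eval_ofReal_map, hR₀, hr]
    have h2 : R₀.eval t = (1 + t^2)^D * r := Complex.ofReal_injective h1
    rw [h2]
    positivity
  obtain ⟨S, hS⟩ := sos_aux R₀.natDegree R₀ (le_refl _) hR₀pos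
  have hSRc : Rc = S * S.map (starRingEnd ℂ) := by rw [← hR₀, hS]
  -- step 5 : degree bounds
  have hRcdeg : Rc.natDegree ≤ 2 * D := by
    rw [hRcdef]
    apply Polynomial.natDegree_sum_le_of_forall_le
    intro i hi
    obtain ⟨h1, h2⟩ := Finset.mem_Icc.mp hi
    have hb1 : (1 + Polynomial.C Complex.I * X : Polynomial ℂ).natDegree ≤ 1 := by
      apply le_trans (Polynomial.natDegree_add_le _ _)
      simp [Polynomial.natDegree_C_mul_le]
    have hb2 : (1 - Polynomial.C Complex.I * X : Polynomial ℂ).natDegree ≤ 1 := by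
      apply le_trans (Polynomial.natDegree_sub_le _ _)
      simp [Polynomial.natDegree_C_mul_le]
    apply le_trans (Polynomial.natDegree_mul_le)
    apply le_trans (add_le_add (Polynomial.natDegree_mul_le) (Polynomial.natDegree_pow_le_of_le _ hb2))
    apply le_trans (add_le_add (add_le_add (le_of_eq (Polynomial.natDegree_C _))
      (Polynomial.natDegree_pow_le_of_le _ hb1)) (le_refl _))
    simp only [zero_add, mul_one]
    omega
  have hSdeg : S.natDegree ≤ D := by
    by_cases hS0 : S = 0
    · simp [hS0]
    have hmapne : S.map (starRingEnd ℂ) ≠ 0 := by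
      simpa [Polynomial.map_eq_zero_iff (starRingEnd ℂ).injective] using hS0
    have : Rc.natDegree = S.natDegree + S.natDegree := by
      rw [hSRc, Polynomial.natDegree_mul hS0 hmapne,
        Polynomial.natDegree_map_eq_of_injective (starRingEnd ℂ).injective]
    omega
  -- step 6 : define P
  set P : Polynomial ℂ := Polynomial.C (((2:ℂ)^D)⁻¹) * ∑ j ∈ Finset.range (D+1),
      Polynomial.C (S.coeff j) * (Polynomial.C (-Complex.I) * (X - 1)) ^ j
        * (X + 1) ^ (D - j) with hPdef
  have hPdeg : P.natDegree ≤ D := by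
    rw [hPdef]
    apply le_trans (Polynomial.natDegree_mul_le)
    rw [Polynomial.natDegree_C, zero_add]
    apply Polynomial.natDegree_sum_le_of_forall_le
    intro j hj
    have hjD : j ≤ D := Nat.lt_succ_iff.mp (Finset.mem_range.mp hj)
    have hb1 : (Polynomial.C (-Complex.I) * (X - 1) : Polynomial ℂ).natDegree ≤ 1 := by
      apply le_trans (Polynomial.natDegree_mul_le)
      simp only [Polynomial.natDegree_C, zero_add]
      apply le_trans (Polynomial.natDegree_sub_le _ _)
      simp
    have hb2 : (X + 1 : Polynomial ℂ).natDegree ≤ 1 := by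
      apply le_trans (Polynomial.natDegree_add_le _ _)
      simp
    apply le_trans (Polynomial.natDegree_mul_le)
    apply le_trans (add_le_add (Polynomial.natDegree_mul_le) (Polynomial.natDegree_pow_le_of_le _ hb2))
    apply le_trans (add_le_add (add_le_add (le_of_eq (Polynomial.natDegree_C _))
      (Polynomial.natDegree_pow_le_of_le _ hb1)) (le_refl _))
    simp only [zero_add, mul_one]
    omega
  -- step 12 : value of P at cay t
  have hPt : ∀ t : ℝ, P.eval (cay t) = S.eval (t:ℂ) / (cayV t) ^ D := by
    intro t
    exact Pval D S hSdeg t (cayV t) (cay t) (cayV_ne t) (cay_add_one t) (cay_sub_one t)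
  -- step 8,9 : define Pstar and f
  set Pstar : Polynomial ℂ := ∑ i ∈ Finset.range (D+1),
      Polynomial.C ((starRingEnd ℂ) (P.coeff i)) * X ^ (D - i) with hPstardef
  set f : Polynomial ℂ := ∑ i ∈ Finset.Icc (-(D : ℤ)) (D : ℤ),
      Polynomial.C (q i) * X ^ (i + (D:ℤ)).toNat with hfdef
  -- claim 1
  have claim1 : ∀ z : ℂ, z ≠ 0 →
      f.eval z = z ^ D * ∑ i ∈ Finset.Icc (-(D : ℤ)) (D : ℤ), q i * z ^ i := by
    intro z hz
    rw [hfdef, Polynomial.eval_finset_sum, Finset.mul_sum]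
    apply Finset.sum_congr rfl
    intro i hi
    obtain ⟨h1, h2⟩ := Finset.mem_Icc.mp hi
    simp only [Polynomial.eval_mul, Polynomial.eval_pow, Polynomial.eval_C, Polynomial.eval_X]
    have e1 : z ^ (i + (D:ℤ)).toNat = z ^ (i + (D:ℤ)) := by
      rw [← zpow_natCast, Int.toNat_of_nonneg (by omega)]
    have e2 : z ^ D = z ^ (D : ℤ) := by rw [zpow_natCast]
    rw [e1, e2, zpow_add₀ hz]
    ring
  -- claim 2
  have claim2 : ∀ z : ℂ, z ≠ 0 →
      Pstar.eval z = z ^ D * (starRingEnd ℂ)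
        (∑ i ∈ Finset.range (D+1), P.coeff i * (((starRingEnd ℂ) z)⁻¹) ^ i) := by
    intro z hz
    rw [hPstardef, Polynomial.eval_finset_sum, map_sum, Finset.mul_sum]
    apply Finset.sum_congr rfl
    intro i hi
    have hiD : i ≤ D := Nat.lt_succ_iff.mp (Finset.mem_range.mp hi)
    simp only [Polynomial.eval_mul, Polynomial.eval_pow, Polynomial.eval_C, Polynomial.eval_X]
    rw [map_mul, map_pow, map_inv₀, Complex.conj_conj]
    rw [pow_sub₀ z hz hiD, inv_pow]
    ring
  -- step 13 : f = P * Pstar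
  have key : f = P * Pstar := by
    have hz0 : f - P * Pstar = 0 := by
      apply Polynomial.eq_zero_of_infinite_isRoot
      apply Set.infinite_of_injective_forall_mem (f := cay) cay_inj
      intro t
      simp only [Set.mem_setOf_eq, IsRoot.def, Polynomial.eval_sub, Polynomial.eval_mul,
        sub_eq_zero]
      have hz : cay t ≠ 0 := cay_ne t
      have hA : ((1 + t^2 : ℝ) : ℂ) ≠ 0 := by
        exact_mod_cast (by positivity : (0:ℝ) < 1 + t^2).ne'
      have hAD : ((1 + t^2 : ℝ) : ℂ) ^ D ≠ 0 := pow_ne_zero _ hA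
      -- value of f
      have hf : f.eval (cay t) = cay t ^ D * (Rc.eval (t:ℂ) / ((1 + t^2 : ℝ) : ℂ) ^ D) := by
        rw [claim1 _ hz, heval t, mul_div_cancel_left₀ _ hAD]
      -- value of Pstar at cay t
      have hcc : ((starRingEnd ℂ) (cay t))⁻¹ = cay t := by
        have h1 : cay t * (starRingEnd ℂ) (cay t) = 1 := by
          rw [Complex.mul_conj]
          rw [← Complex.sq_norm, cay_abs]
          norm_num
        exact inv_eq_of_mul_eq_one_left h1
      have hPs : Pstar.eval (cay t) = cay t ^ D * (starRingEnd ℂ) (P.eval (cay t)) := by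
        rw [claim2 _ hz, hcc]
        congr 2
        rw [Polynomial.eval_eq_sum_range' (Nat.lt_succ_of_le hPdeg) (cay t)]
      have hconjv : (starRingEnd ℂ) (cayV t) = cayU t := by
        rw [← conj_cayU, Complex.conj_conj]
      have hRceval : Rc.eval (t:ℂ) = S.eval (t:ℂ) * (starRingEnd ℂ) (S.eval (t:ℂ)) := by
        rw [hSRc, Polynomial.eval_mul, eval_map_conj]
        congr 2
        simp
      rw [hf, hPs, hPt t, hRceval]
      rw [map_div₀, map_pow, hconjv]
      have huvD : cayU t ^ D * cayV t ^ D = ((1 + t^2 : ℝ) : ℂ) ^ D := by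
        rw [← mul_pow, cayUV]
      have hu0 : cayU t ^ D ≠ 0 := pow_ne_zero _ (cayU_ne t)
      have hv0 : cayV t ^ D ≠ 0 := pow_ne_zero _ (cayV_ne t)
      rw [← huvD]
      field_simp
    linear_combination (norm := module) hz0
  -- conclusion
  refine ⟨fun i => P.coeff i, ?_⟩
  intro z hz
  have hzD : z ^ D ≠ 0 := pow_ne_zero _ hz
  have hPz : ∑ i ∈ Finset.range (D+1), P.coeff i * z ^ i = P.eval z := by
    rw [Polynomial.eval_eq_sum_range' (Nat.lt_succ_of_le hPdeg) z]
  have h1 := claim1 z hz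
  have h2 := claim2 z hz
  rw [key, Polynomial.eval_mul] at h1
  rw [hPz]
  have h3 : (starRingEnd ℂ) (∑ i ∈ Finset.range (D + 1), P.coeff i * ((starRingEnd ℂ) z)⁻¹ ^ i)
      = Pstar.eval z / z ^ D := by
    rw [h2]; field_simp
  rw [h3, ← mul_div_assoc, eq_div_iff hzD]
  linear_combination -h1


/-- **Fejér–Riesz theorem.** A Laurent polynomial `Q(z) = ∑_{i=-D}^{D} q_i z^i` is real and
nonnegative on the unit circle if and only if there is a polynomial
`P(z) = ∑_{i=0}^{D} p_i z^i` of degree at most `D` with `Q(z) = P(z) ⬝ conj (P (1/conj z))`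
for all nonzero `z`. -/
theorem fejer_riesz (D : ℕ) (q : ℤ → ℂ) :
    (∀ z : ℂ, ‖z‖ = 1 →
      ∃ r : ℝ, 0 ≤ r ∧ (∑ i ∈ Finset.Icc (-(D : ℤ)) (D : ℤ), q i * z ^ i) = (r : ℂ)) ↔
    (∃ p : ℕ → ℂ, ∀ z : ℂ, z ≠ 0 →
      (∑ i ∈ Finset.Icc (-(D : ℤ)) (D : ℤ), q i * z ^ i) =
        (∑ i ∈ Finset.range (D + 1), p i * z ^ i) *
          (starRingEnd ℂ) (∑ i ∈ Finset.range (D + 1), p i * ((starRingEnd ℂ) z)⁻¹ ^ i)) := by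
  constructor
  · exact fejer_riesz_forward D q
  · rintro ⟨p, hp⟩ z hz
    have hz0 : z ≠ 0 := by
      intro h; rw [h] at hz; simp at hz
    have hcc : ((starRingEnd ℂ) z)⁻¹ = z := by
      apply inv_eq_of_mul_eq_one_left
      rw [Complex.mul_conj, ← Complex.sq_norm, hz]
      norm_num
    rw [hp z hz0, hcc]
    set w : ℂ := ∑ i ∈ Finset.range (D + 1), p i * z ^ i with hw
    refine ⟨Complex.normSq w, Complex.normSq_nonneg w, ?_⟩
    rw [Complex.mul_conj]

end FRmain
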